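/- arXiv:1405.2432 — 2 statements merged into one kernel-verified Lean document; each statement's English description precedes it below -/
import Mathlib

section
/- Let K ≥ 2 and L ≥ 1 be integers, x_1, …, x_L nonnegative integers with x_1 + ⋯ + x_L = K − 1, H = L·K − Σ_{l=1}^{L} x_l·(L − l), and |S_l| = K − Σ_{j=1}^{l−1} x_j. Let T > H > 0 and d > 0 be reals, and let Q : ℝ → ℝ be nonnegative and antitone (monotone decreasing). Suppose real numbers e_p(1), …, e_p(L) satisfy e_p(l) ≤ 2·(|S_l| − x_l)·Q(l·(T − H)/H) for every l, and a real number e_r satisfies e_r ≤ Σ_{l=1}^{L} e_p(l). Then e_r ≤ 2·(H − K + 1)·Q((T − H)/H). -/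
/-- **Main error bound of Batch Elimination.** With `H = L·K - ∑ x_l·(L-l)`,
`|S_l| = K - ∑_{j<l} x_j`, a nonnegative antitone tail bound `Q`, per-round elimination
probabilities `ep l ≤ 2(|S_l| - x_l)·Q(l(T-H)/H)` and recommendation error
`er ≤ ∑ ep l`, we get `er ≤ 2(H - K + 1)·Q((T-H)/H)`. -/
theorem stmt2 (K L : ℕ) (hK : 2 ≤ K) (hL : 1 ≤ L)
    (x : ℕ → ℕ) (hx : ∑ l ∈ Finset.Icc 1 L, x l = K - 1)
    (H : ℝ) (hH : H = (L : ℝ) * K - ∑ l ∈ Finset.Icc 1 L, (x l : ℝ) * ((L : ℝ) - l))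
    (S : ℕ → ℝ) (hS : ∀ l, S l = (K : ℝ) - ∑ j ∈ Finset.Icc 1 (l - 1), (x j : ℝ))
    (T d : ℝ) (hH0 : 0 < H) (hTH : T > H) (hd : 0 < d)
    (Q : ℝ → ℝ) (hQ0 : ∀ y, 0 ≤ Q y) (hQ : Antitone Q)
    (ep : ℕ → ℝ) (er : ℝ)
    (hep : ∀ l ∈ Finset.Icc 1 L, ep l ≤ 2 * (S l - x l) * Q ((l : ℝ) * (T - H) / H))
    (her : er ≤ ∑ l ∈ Finset.Icc 1 L, ep l) :
    er ≤ 2 * (H - (K : ℝ) + 1) * Q ((T - H) / H) := by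
  have hc0 : 0 ≤ Q ((T - H) / H) := hQ0 _
  -- rewrite S l - x l as K - ∑_{j ∈ Icc 1 l} x j
  have hSx : ∀ l ∈ Finset.Icc 1 L,
      S l - (x l : ℝ) = (K : ℝ) - ∑ j ∈ Finset.Icc 1 l, (x j : ℝ) := by
    intro l hl
    simp only [Finset.mem_Icc] at hl
    have h1 : l = (l - 1) + 1 := (Nat.succ_pred_eq_of_pos hl.1).symm
    have h2 : ∑ j ∈ Finset.Icc 1 l, (x j : ℝ)
        = ∑ j ∈ Finset.Icc 1 (l - 1), (x j : ℝ) + (x l : ℝ) := by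
      rw [h1, Finset.sum_Icc_succ_top (by omega)]
      rw [← h1]
    rw [hS l, h2]; ring
  -- nonnegativity of S l - x l
  have hnn : ∀ l ∈ Finset.Icc 1 L, 0 ≤ S l - (x l : ℝ) := by
    intro l hl
    rw [hSx l hl]
    have hsub : Finset.Icc 1 l ⊆ Finset.Icc 1 L := by
      apply Finset.Icc_subset_Icc_right
      simp only [Finset.mem_Icc] at hl; exact hl.2
    have h1 : ∑ j ∈ Finset.Icc 1 l, x j ≤ K - 1 :=
      hx ▸ Finset.sum_le_sum_of_subset hsub
    have h2 : ((∑ j ∈ Finset.Icc 1 l, x j : ℕ) : ℝ) ≤ ((K - 1 : ℕ) : ℝ) := by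
      exact_mod_cast h1
    push_cast at h2
    rw [Nat.cast_sub (by omega)] at h2
    push_cast at h2 ⊢
    linarith
  -- key sum identity : ∑ (S l - x l) = H - K + 1
  have hswap : ∑ l ∈ Finset.Icc 1 L, ∑ j ∈ Finset.Icc 1 l, (x j : ℝ)
      = ∑ j ∈ Finset.Icc 1 L, ∑ l ∈ Finset.Icc j L, (x j : ℝ) := by
    apply Finset.sum_comm'
    intro a b
    simp only [Finset.mem_Icc]
    omega
  have hinner : ∀ j ∈ Finset.Icc 1 L,
      ∑ l ∈ Finset.Icc j L, (x j : ℝ) = ((L : ℝ) - j + 1) * (x j : ℝ) := by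
    intro j hj
    simp only [Finset.mem_Icc] at hj
    rw [Finset.sum_const, Nat.card_Icc, nsmul_eq_mul]
    congr 1
    rw [Nat.cast_sub (by omega)]
    push_cast; ring
  have hxsum : ((∑ l ∈ Finset.Icc 1 L, x l : ℕ) : ℝ) = (K : ℝ) - 1 := by
    rw [hx, Nat.cast_sub (by omega)]; simp
  have hsum : ∑ l ∈ Finset.Icc 1 L, (S l - (x l : ℝ)) = H - (K : ℝ) + 1 := by
    rw [Finset.sum_congr rfl hSx, Finset.sum_sub_distrib, Finset.sum_const,
      Nat.card_Icc, hswap, Finset.sum_congr rfl hinner]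
    have hexp : ∑ j ∈ Finset.Icc 1 L, ((L : ℝ) - j + 1) * (x j : ℝ)
        = (∑ j ∈ Finset.Icc 1 L, (x j : ℝ) * ((L : ℝ) - j))
          + ∑ j ∈ Finset.Icc 1 L, (x j : ℝ) := by
      rw [← Finset.sum_add_distrib]
      exact Finset.sum_congr rfl fun j _ => by ring
    rw [hexp]
    have : ∑ j ∈ Finset.Icc 1 L, (x j : ℝ) = (K : ℝ) - 1 := by
      rw [← Nat.cast_sum]; exact hxsum
    rw [this, hH]
    simp only [Nat.add_sub_cancel, nsmul_eq_mul]
    ring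
  -- Q monotonicity per term
  have hQle : ∀ l ∈ Finset.Icc 1 L,
      Q ((l : ℝ) * (T - H) / H) ≤ Q ((T - H) / H) := by
    intro l hl
    simp only [Finset.mem_Icc] at hl
    apply hQ
    rw [div_le_div_iff₀ hH0 hH0]
    have h1 : (1 : ℝ) ≤ (l : ℝ) := by exact_mod_cast hl.1
    nlinarith [mul_nonneg (sub_nonneg.mpr h1) (mul_pos (sub_pos.mpr hTH) hH0).le]
  -- chain of inequalities
  have step1 : ∑ l ∈ Finset.Icc 1 L, ep l
      ≤ ∑ l ∈ Finset.Icc 1 L, 2 * (S l - (x l : ℝ)) * Q ((T - H) / H) := by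
    apply Finset.sum_le_sum
    intro l hl
    refine (hep l hl).trans ?_
    have := hnn l hl
    have := hQle l hl
    have := hQ0 ((l : ℝ) * (T - H) / H)
    nlinarith
  have step2 : ∑ l ∈ Finset.Icc 1 L, 2 * (S l - (x l : ℝ)) * Q ((T - H) / H)
      = 2 * (H - (K : ℝ) + 1) * Q ((T - H) / H) := by
    rw [← Finset.sum_mul, ← Finset.mul_sum, hsum]
  linarith [her, step1, step2.le]
end

section
/- Let X_1, …, X_N (N ≥ 2) be i.i.d. real-valued random variables with A ≤ X_k ≤ B almost surely (A < B). Let μ̂ = (1/N)·Σ_{k=1}^N X_k be the sample mean, σ² = Var(X_1), and σ̂² = (1/(N−1))·Σ_{k=1}^N (X_k − μ̂)² the unbiased variance estimator. Then for every ε > 0, P(|σ̂² − σ²| > ε) ≤ 2·exp(− 2·(N−1)²·ε² / (N·(B−A)⁴)). -/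
open MeasureTheory ProbabilityTheory

section Aux
open Real

lemma log_core (p : ℝ) (hp0 : 0 ≤ p) (hp1 : p ≤ 1) (h : ℝ) :
    Real.log (1 - p + p * Real.exp h) - p * h ≤ h ^ 2 / 8 := by
  have hD : ∀ x : ℝ, 0 < 1 - p + p * Real.exp x := by
    intro x
    rcases lt_or_eq_of_le hp1 with h1 | h1
    · have : 0 < 1 - p := by linarith
      have : 0 ≤ p * Real.exp x := mul_nonneg hp0 (Real.exp_pos x).le
      linarith
    · subst h1; simpa using Real.exp_pos x
  -- g = derivative of ψ
  set g : ℝ → ℝ := fun x => x / 4 - (p * Real.exp x / (1 - p + p * Real.exp x) - p) with hg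
  set ψ : ℝ → ℝ := fun x => x ^ 2 / 8 - (Real.log (1 - p + p * Real.exp x) - p * x) with hψ
  have hder_g : ∀ x : ℝ, HasDerivAt g
      (1 / 4 - p * (1 - p) * Real.exp x / (1 - p + p * Real.exp x) ^ 2) x := by
    intro x
    have h1 : HasDerivAt (fun x => p * Real.exp x) (p * Real.exp x) x :=
      (Real.hasDerivAt_exp x).const_mul p
    have h2 : HasDerivAt (fun x => 1 - p + p * Real.exp x) (p * Real.exp x) x := by
      simpa using h1.const_add (1 - p)
    have h3 : HasDerivAt (fun x => p * Real.exp x / (1 - p + p * Real.exp x))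
        ((p * Real.exp x * (1 - p + p * Real.exp x) - p * Real.exp x * (p * Real.exp x)) /
          (1 - p + p * Real.exp x) ^ 2) x := h1.div h2 (hD x).ne'
    have h4 := ((hasDerivAt_id x).div_const 4).sub (h3.sub_const p)
    refine h4.congr_deriv ?_
    field_simp
    ring
  have hder_ψ : ∀ x : ℝ, HasDerivAt ψ (g x) x := by
    intro x
    have h1 : HasDerivAt (fun x => p * Real.exp x) (p * Real.exp x) x :=
      (Real.hasDerivAt_exp x).const_mul p
    have h2 : HasDerivAt (fun x => 1 - p + p * Real.exp x) (p * Real.exp x) x := by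
      simpa using h1.const_add (1 - p)
    have h3 : HasDerivAt (fun x => Real.log (1 - p + p * Real.exp x))
        (p * Real.exp x / (1 - p + p * Real.exp x)) x := h2.log (hD x).ne'
    have h4 : HasDerivAt (fun x : ℝ => x ^ 2 / 8) (x / 4) x := by
      have := ((hasDerivAt_pow 2 x).div_const 8)
      refine this.congr_deriv ?_; norm_num; ring
    have h5 := h4.sub (h3.sub ((hasDerivAt_id x).const_mul p))
    refine h5.congr_deriv ?_
    simp only [hg]
    ring
  have hg_mono : Monotone g := by
    refine monotone_of_deriv_nonneg (fun x => (hder_g x).differentiableAt) ?_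
    intro x
    rw [(hder_g x).deriv]
    rw [sub_nonneg, div_le_iff₀ (pow_pos (hD x) 2)]
    nlinarith [sq_nonneg (1 - p - p * Real.exp x), Real.exp_pos x, hD x]
  have hg0 : g 0 = 0 := by simp [hg]
  have hψ0 : ψ 0 = 0 := by simp [hψ]
  have key : ∀ x : ℝ, 0 ≤ ψ x := by
    intro x
    rcases le_total 0 x with hx | hx
    · have : MonotoneOn ψ (Set.Ici 0) := by
        refine monotoneOn_of_deriv_nonneg (convex_Ici 0)
          (fun y _ => ((hder_ψ y).differentiableAt).continuousAt.continuousWithinAt)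
          (fun y _ => ((hder_ψ y).differentiableAt).differentiableWithinAt) ?_
        intro y hy
        rw [(hder_ψ y).deriv]
        rw [interior_Ici] at hy
        have := hg_mono (le_of_lt hy)
        rw [hg0] at this; exact this
      have := this (Set.self_mem_Ici) hx hx
      rwa [hψ0] at this
    · have : AntitoneOn ψ (Set.Iic 0) := by
        refine antitoneOn_of_deriv_nonpos (convex_Iic 0)
          (fun y _ => ((hder_ψ y).differentiableAt).continuousAt.continuousWithinAt)
          (fun y _ => ((hder_ψ y).differentiableAt).differentiableWithinAt) ?_
        intro y hy
        rw [(hder_ψ y).deriv]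
        rw [interior_Iic] at hy
        have := hg_mono (le_of_lt hy)
        rw [hg0] at this; exact this
      have := this (Set.mem_Iic.2 hx) (Set.self_mem_Iic) hx
      rwa [hψ0] at this
  have := key h
  simp only [hψ] at this
  linarith

lemma integrable_of_bddd {Ω : Type*} [MeasurableSpace Ω] {μ : Measure Ω}
    [IsFiniteMeasure μ] {Y : Ω → ℝ} (hY : AEStronglyMeasurable Y μ)
    (C : ℝ) (hC : ∀ ω, |Y ω| ≤ C) : Integrable Y μ := by
  refine Integrable.mono' (integrable_const C) hY ?_
  exact Filter.Eventually.of_forall fun ω => by simpa using hC ω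

lemma hoeffding_lemma {Ω : Type*} [MeasurableSpace Ω] (μ : Measure Ω)
    [IsProbabilityMeasure μ] {Y : Ω → ℝ} (hY : AEStronglyMeasurable Y μ)
    {a b : ℝ} (hab : a ≤ b) (hbdd : ∀ ω, Y ω ∈ Set.Icc a b)
    (hmean : ∫ ω, Y ω ∂μ = 0) (t : ℝ) :
    ∫ ω, Real.exp (t * Y ω) ∂μ ≤ Real.exp (t ^ 2 * (b - a) ^ 2 / 8) := by
  have hYint : Integrable Y μ :=
    integrable_of_bddd hY (max |a| |b|) (fun ω => by
      rcases hbdd ω with ⟨h1, h2⟩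
      rw [abs_le]
      constructor
      · exact le_trans (neg_le_neg (le_max_left |a| |b|)) (neg_abs_le a |>.trans h1)
      · exact h2.trans ((le_abs_self b).trans (le_max_right |a| |b|)))
  have ha0 : a ≤ 0 := by
    have h1 : ∫ _ω, a ∂μ ≤ ∫ ω, Y ω ∂μ :=
      integral_mono (integrable_const a) hYint fun ω => (hbdd ω).1
    simpa [hmean] using h1
  have hb0 : 0 ≤ b := by
    have h1 : ∫ ω, Y ω ∂μ ≤ ∫ _ω, b ∂μ :=
      integral_mono hYint (integrable_const b) fun ω => (hbdd ω).2
    simpa [hmean] using h1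
  rcases eq_or_lt_of_le hab with heq | hlt
  · -- a = b ⇒ Y ≡ a = 0
    subst heq
    have : a = 0 := le_antisymm ha0 hb0
    subst this
    have hYzero : ∀ ω, Y ω = 0 := fun ω => le_antisymm (hbdd ω).2 (hbdd ω).1
    simp only [hYzero, mul_zero, Real.exp_zero]
    simp [Real.exp_nonneg]
  -- main case a < b
  have hba : 0 < b - a := sub_pos.2 hlt
  -- pointwise convexity bound
  have hpt : ∀ ω, Real.exp (t * Y ω) ≤
      (b - Y ω) / (b - a) * Real.exp (t * a) + (Y ω - a) / (b - a) * Real.exp (t * b) := by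
    intro ω
    have h1 : (0:ℝ) ≤ (b - Y ω) / (b - a) := div_nonneg (by linarith [(hbdd ω).2]) hba.le
    have h2 : (0:ℝ) ≤ (Y ω - a) / (b - a) := div_nonneg (by linarith [(hbdd ω).1]) hba.le
    have h3 : (b - Y ω) / (b - a) + (Y ω - a) / (b - a) = 1 := by
      field_simp; ring
    have h4 := convexOn_exp.2 (Set.mem_univ (t * a)) (Set.mem_univ (t * b)) h1 h2 h3
    have hbane : b - a ≠ 0 := hba.ne'
    have h5 : ((b - Y ω) / (b - a)) * (t * a) + ((Y ω - a) / (b - a)) * (t * b) = t * Y ω := by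
      field_simp
      ring
    rw [smul_eq_mul, smul_eq_mul, smul_eq_mul, smul_eq_mul, h5] at h4
    exact h4
  -- integrate
  have hint_exp : Integrable (fun ω => Real.exp (t * Y ω)) μ := by
    refine integrable_of_bddd ((Real.continuous_exp.comp (continuous_const.mul continuous_id)).aestronglyMeasurable.comp_aemeasurable hY.aemeasurable) (max (Real.exp (t * a)) (Real.exp (t * b))) ?_
    intro ω
    rw [abs_of_pos (Real.exp_pos _)]
    rcases le_total 0 t with ht | ht
    · exact le_max_of_le_right (Real.exp_le_exp.2 (mul_le_mul_of_nonneg_left (hbdd ω).2 ht))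
    · exact le_max_of_le_left (Real.exp_le_exp.2 (mul_le_mul_of_nonpos_left (hbdd ω).1 ht))
  have hintRHS : Integrable (fun ω =>
      (b - Y ω) / (b - a) * Real.exp (t * a) + (Y ω - a) / (b - a) * Real.exp (t * b)) μ := by
    apply Integrable.add
    · exact ((((integrable_const b).sub hYint).div_const (b - a)).mul_const _)
    · exact (((hYint.sub (integrable_const a)).div_const (b - a)).mul_const _)
  have hI : ∫ ω, Real.exp (t * Y ω) ∂μ ≤
      b / (b - a) * Real.exp (t * a) + (-a) / (b - a) * Real.exp (t * b) := by
    calc ∫ ω, Real.exp (t * Y ω) ∂μ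
        ≤ ∫ ω, ((b - Y ω) / (b - a) * Real.exp (t * a) +
            (Y ω - a) / (b - a) * Real.exp (t * b)) ∂μ :=
          integral_mono hint_exp hintRHS hpt
      _ = b / (b - a) * Real.exp (t * a) + (-a) / (b - a) * Real.exp (t * b) := by
          have e1 : ∀ ω, (b - Y ω) / (b - a) * Real.exp (t * a) +
              (Y ω - a) / (b - a) * Real.exp (t * b) =
              (Real.exp (t * a) * b / (b - a) + Real.exp (t * b) * (-a) / (b - a)) +
              (Real.exp (t * b) / (b - a) - Real.exp (t * a) / (b - a)) * Y ω := by
            intro ω; field_simp; ring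
          simp_rw [e1]
          rw [integral_add (integrable_const _) (hYint.const_mul _),
            integral_const_mul, hmean, integral_const]
          simp
          ring
  -- rewrite RHS via p := -a/(b-a), s := t*(b-a)
  have hp0 : 0 ≤ -a / (b - a) := div_nonneg (by linarith) hba.le
  have hp1 : -a / (b - a) ≤ 1 := by
    rw [div_le_one hba]; linarith
  have hea : Real.exp (t * a) ≠ 0 := (Real.exp_pos _).ne'
  have hDpos : 0 < 1 - -a / (b - a) + -a / (b - a) * Real.exp (t * (b - a)) := by
    rcases eq_or_lt_of_le hp0 with h' | h'
    · rw [← h']; norm_num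
    · have h1 : 0 ≤ 1 - -a / (b - a) := by linarith
      nlinarith [Real.exp_pos (t * (b - a))]
  have hkey : b / (b - a) * Real.exp (t * a) + -a / (b - a) * Real.exp (t * b) =
      Real.exp (Real.log (1 - -a / (b - a) + -a / (b - a) * Real.exp (t * (b - a))) -
        -a / (b - a) * (t * (b - a))) := by
    have e0 : -a / (b - a) * (t * (b - a)) = -(t * a) := by
      field_simp
    have e1 : Real.exp (t * (b - a)) = Real.exp (t * b) / Real.exp (t * a) := by
      rw [← Real.exp_sub]; congr 1; ring
    rw [Real.exp_sub, Real.exp_log hDpos, e0, Real.exp_neg, div_inv_eq_mul, e1]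
    field_simp
    ring
  rw [hkey] at hI
  refine hI.trans ?_
  rw [Real.exp_le_exp]
  have := log_core (-a / (b - a)) hp0 hp1 (t * (b - a))
  calc Real.log (1 - -a / (b - a) + -a / (b - a) * Real.exp (t * (b - a))) -
        -a / (b - a) * (t * (b - a)) ≤ (t * (b - a)) ^ 2 / 8 := this
    _ = t ^ 2 * (b - a) ^ 2 / 8 := by ring

lemma mcdiarmid_mgf (μ : Measure ℝ) [IsProbabilityMeasure μ] :
    ∀ (n : ℕ) (f : (Fin n → ℝ) → ℝ), Measurable f → ∀ (M : ℝ), (∀ x, |f x| ≤ M) →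
    ∀ (c : Fin n → ℝ), (∀ (i : Fin n) (x x' : Fin n → ℝ),
        (∀ j, j ≠ i → x j = x' j) → |f x - f x'| ≤ c i) →
    ∀ t : ℝ,
    ∫ x, Real.exp (t * (f x - ∫ y, f y ∂(Measure.pi fun _ : Fin n => μ)))
        ∂(Measure.pi fun _ : Fin n => μ) ≤ Real.exp (t ^ 2 * (∑ i, c i ^ 2) / 8) := by
  intro n
  induction n with
  | zero =>
    intro f hf M hM c hc t
    have h1 : ∀ x : Fin 0 → ℝ, f x = f default := fun x =>
      congrArg f (funext fun i => i.elim0)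
    calc ∫ x, Real.exp (t * (f x - ∫ y, f y ∂(Measure.pi fun _ : Fin 0 => μ)))
          ∂(Measure.pi fun _ : Fin 0 => μ)
        = ∫ _x, (1:ℝ) ∂(Measure.pi fun _ : Fin 0 => μ) := by
          refine integral_congr_ae (Filter.Eventually.of_forall fun x => ?_)
          have h2 : ∫ y, f y ∂(Measure.pi fun _ : Fin 0 => μ) = f default := by
            simp only [h1]
            simp
          simp only [h1 x, h2, sub_self, mul_zero, Real.exp_zero]
      _ = 1 := by simp
      _ ≤ Real.exp (t ^ 2 * (∑ i, c i ^ 2) / 8) := by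
          simp [Real.exp_nonneg]
  | succ n ih =>
    intro f hf M hM c hc t
    have hM0 : 0 ≤ M := le_trans (abs_nonneg _) (hM (fun _ => 0))
    have hc0 : 0 ≤ c 0 := by
      have := hc 0 (fun _ => 0) (fun _ => 0) (fun _ _ => rfl)
      simpa using this
    set P1 : Measure (Fin (n+1) → ℝ) := Measure.pi fun _ => μ with hP1
    set ν : Measure (Fin n → ℝ) := Measure.pi fun _ => μ with hν
    set e : (Fin (n+1) → ℝ) ≃ᵐ ℝ × (Fin n → ℝ) :=
      MeasurableEquiv.piFinSuccAbove (fun _ => ℝ) 0 with he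
    have hmp : MeasurePreserving e P1 (μ.prod ν) :=
      measurePreserving_piFinSuccAbove (fun _ => μ) 0
    set H : ℝ × (Fin n → ℝ) → ℝ := fun z => f (e.symm z) with hH
    have hHmeas : Measurable H := hf.comp e.symm.measurable
    have hHM : ∀ z, |H z| ≤ M := fun z => hM _
    -- coordinates of e.symm
    have hsymm : ∀ (a : ℝ) (y : Fin n → ℝ), e.symm (a, y) = Fin.insertNth 0 a y := by
      intro a y
      rfl
    have hcoord0 : ∀ (a : ℝ) (y : Fin n → ℝ), e.symm (a, y) 0 = a := by
      intro a y; rw [hsymm]; simp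
    have hcoordsucc : ∀ (a : ℝ) (y : Fin n → ℝ) (m : Fin n), e.symm (a, y) m.succ = y m := by
      intro a y m
      rw [hsymm]
      have h5 : (m.succ : Fin (n+1)) = (0 : Fin (n+1)).succAbove m := rfl
      rw [h5]
      simp
    set Ef : ℝ := ∫ y, f y ∂P1 with hEf
    have hEfM : |Ef| ≤ M := by
      rw [hEf]
      have := norm_integral_le_of_norm_le_const (μ := P1) (f := f) (C := M)
        (Filter.Eventually.of_forall fun x => by simpa using hM x)
      simpa using this
    set g : (Fin n → ℝ) → ℝ := fun y => ∫ a, H (a, y) ∂μ with hg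
    have hgsm : StronglyMeasurable g :=
      (hHmeas.stronglyMeasurable).integral_prod_left'
    have hgM : ∀ y, |g y| ≤ M := by
      intro y
      have := norm_integral_le_of_norm_le_const (μ := μ) (f := fun a => H (a, y)) (C := M)
        (Filter.Eventually.of_forall fun a => by simpa using hHM (a, y))
      simpa using this
    have hintHy : ∀ y, Integrable (fun a => H (a, y)) μ := fun y =>
      integrable_of_bddd (hHmeas.comp (measurable_id.prodMk measurable_const)
        : Measurable fun a => H (a, y)).aestronglyMeasurable M (fun a => hHM _)
    -- bounded differences for g
    have hcg : ∀ (j : Fin n) (y y' : Fin n → ℝ), (∀ m, m ≠ j → y m = y' m) →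
        |g y - g y'| ≤ c j.succ := by
      intro j y y' hyy'
      have hptw : ∀ a, |H (a, y) - H (a, y')| ≤ c j.succ := by
        intro a
        apply hc j.succ
        intro k hk
        refine Fin.cases ?_ ?_ k hk
        · intro _; rw [hcoord0, hcoord0]
        · intro m hm
          rw [hcoordsucc, hcoordsucc]
          exact hyy' m (fun hmj => hm (by rw [hmj]))
      have heq : g y - g y' = ∫ a, (H (a, y) - H (a, y')) ∂μ :=
        (integral_sub (hintHy y) (hintHy y')).symm
      rw [heq]
      have := norm_integral_le_of_norm_le_const (μ := μ)
        (f := fun a => H (a, y) - H (a, y')) (C := c j.succ)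
        (Filter.Eventually.of_forall fun a => by simpa using hptw a)
      simpa using this
    -- Ef = ∫ g dν
    have hintHprod : Integrable H (μ.prod ν) :=
      integrable_of_bddd hHmeas.aestronglyMeasurable M hHM
    have hEfg : Ef = ∫ y, g y ∂ν := by
      rw [hEf]
      have h1 : ∫ x, f x ∂P1 = ∫ z, f (e.symm z) ∂(μ.prod ν) :=
        ((hmp.symm e).integral_comp' f).symm
      rw [h1]
      have h2 : ∫ z, H z ∂(μ.prod ν) = ∫ a, ∫ y, H (a, y) ∂ν ∂μ := integral_prod H hintHprod
      have h3 : ∫ a, ∫ y, H (a, y) ∂ν ∂μ = ∫ y, ∫ a, H (a, y) ∂μ ∂ν :=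
        integral_integral_swap hintHprod
      exact h2.trans h3
    -- the inner Hoeffding bound, pointwise in y
    set K : ℝ := Real.exp (|t| * (2 * M)) with hK
    have hexp_bound : ∀ z : ℝ × (Fin n → ℝ), Real.exp (t * (H z - Ef)) ≤ K := by
      intro z
      rw [hK, Real.exp_le_exp]
      calc t * (H z - Ef) ≤ |t * (H z - Ef)| := le_abs_self _
        _ = |t| * |H z - Ef| := abs_mul _ _
        _ ≤ |t| * (2 * M) := by
            apply mul_le_mul_of_nonneg_left _ (abs_nonneg t)
            calc |H z - Ef| ≤ |H z| + |Ef| := abs_sub _ _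
              _ ≤ M + M := add_le_add (hHM z) hEfM
              _ = 2 * M := by ring
    have hΦmeas : Measurable fun z : ℝ × (Fin n → ℝ) => Real.exp (t * (H z - Ef)) :=
      Real.measurable_exp.comp ((hHmeas.sub measurable_const).const_mul t)
    have hstep3 : ∀ y, ∫ a, Real.exp (t * (H (a, y) - Ef)) ∂μ ≤
        Real.exp (t ^ 2 * c 0 ^ 2 / 8) * Real.exp (t * (g y - Ef)) := by
      intro y
      set L : ℝ := sInf (Set.range fun a => H (a, y)) with hL
      have hne : (Set.range fun a => H (a, y)).Nonempty := ⟨H (0, y), ⟨0, rfl⟩⟩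
      have hbb : BddBelow (Set.range fun a => H (a, y)) := by
        refine ⟨-M, fun v hv => ?_⟩
        obtain ⟨a, rfl⟩ := hv
        exact neg_le_of_abs_le (hHM _)
      have hlow : ∀ a, L ≤ H (a, y) := fun a => csInf_le hbb ⟨a, rfl⟩
      have hup : ∀ a, H (a, y) ≤ L + c 0 := by
        intro a
        have h1 : H (a, y) - c 0 ≤ L := by
          refine le_csInf hne ?_
          rintro v ⟨a', rfl⟩
          have h2 : |H (a, y) - H (a', y)| ≤ c 0 := by
            apply hc 0
            intro k hk
            refine Fin.cases ?_ ?_ k hk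
            · intro h0; exact absurd rfl h0
            · intro m _; rw [hcoordsucc, hcoordsucc]
          have := abs_le.1 h2
          linarith [this.2]
        linarith
      set Y : ℝ → ℝ := fun a => H (a, y) - g y with hY
      have hYmeas : AEStronglyMeasurable Y μ :=
        ((hHmeas.comp (measurable_id.prodMk measurable_const)).sub
          measurable_const).aestronglyMeasurable
      have hYmean : ∫ a, Y a ∂μ = 0 := by
        rw [hY]
        rw [integral_sub (hintHy y) (integrable_const _)]
        simp [hg]
      have hYbdd : ∀ a, Y a ∈ Set.Icc (L - g y) (L + c 0 - g y) := by
        intro a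
        constructor
        · simp only [hY]; linarith [hlow a]
        · simp only [hY]; linarith [hup a]
      have hhoef := hoeffding_lemma μ hYmeas (by linarith : L - g y ≤ L + c 0 - g y)
        hYbdd hYmean t
      have hw : (L + c 0 - g y - (L - g y)) = c 0 := by ring
      rw [hw] at hhoef
      have heq2 : ∀ a, Real.exp (t * (H (a, y) - Ef)) =
          Real.exp (t * Y a) * Real.exp (t * (g y - Ef)) := by
        intro a
        rw [← Real.exp_add, hY]
        congr 1
        ring
      calc ∫ a, Real.exp (t * (H (a, y) - Ef)) ∂μ
          = ∫ a, Real.exp (t * Y a) * Real.exp (t * (g y - Ef)) ∂μ := by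
            exact integral_congr_ae (Filter.Eventually.of_forall heq2)
        _ = (∫ a, Real.exp (t * Y a) ∂μ) * Real.exp (t * (g y - Ef)) := integral_mul_const _ _
        _ ≤ Real.exp (t ^ 2 * c 0 ^ 2 / 8) * Real.exp (t * (g y - Ef)) :=
            mul_le_mul_of_nonneg_right hhoef (Real.exp_nonneg _)
    -- assemble
    have hΦprodint : Integrable (fun z : ℝ × (Fin n → ℝ) => Real.exp (t * (H z - Ef)))
        (μ.prod ν) :=
      integrable_of_bddd hΦmeas.aestronglyMeasurable K
        (fun z => by rw [abs_of_pos (Real.exp_pos _)]; exact hexp_bound z)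
    have hφsm : StronglyMeasurable fun y => ∫ a, Real.exp (t * (H (a, y) - Ef)) ∂μ :=
      (hΦmeas.stronglyMeasurable).integral_prod_left'
    have hφbdd : ∀ y, |∫ a, Real.exp (t * (H (a, y) - Ef)) ∂μ| ≤ K := by
      intro y
      have := norm_integral_le_of_norm_le_const (μ := μ)
        (f := fun a => Real.exp (t * (H (a, y) - Ef))) (C := K)
        (Filter.Eventually.of_forall fun a => by
          rw [Real.norm_eq_abs, abs_of_pos (Real.exp_pos _)]; exact hexp_bound (a, y))
      simpa using this
    have hgexp_bdd : ∀ y, |Real.exp (t ^ 2 * c 0 ^ 2 / 8) * Real.exp (t * (g y - Ef))| ≤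
        Real.exp (t ^ 2 * c 0 ^ 2 / 8) * K := by
      intro y
      rw [abs_of_pos (by positivity)]
      apply mul_le_mul_of_nonneg_left _ (Real.exp_nonneg _)
      rw [hK, Real.exp_le_exp]
      calc t * (g y - Ef) ≤ |t * (g y - Ef)| := le_abs_self _
        _ = |t| * |g y - Ef| := abs_mul _ _
        _ ≤ |t| * (2 * M) := by
            apply mul_le_mul_of_nonneg_left _ (abs_nonneg t)
            calc |g y - Ef| ≤ |g y| + |Ef| := abs_sub _ _
              _ ≤ M + M := add_le_add (hgM y) hEfM
              _ = 2 * M := by ring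
    have hRHSint : Integrable
        (fun y => Real.exp (t ^ 2 * c 0 ^ 2 / 8) * Real.exp (t * (g y - Ef))) ν :=
      integrable_of_bddd ((Real.measurable_exp.comp
        ((hgsm.measurable.sub measurable_const).const_mul t)).const_mul _).aestronglyMeasurable
        (Real.exp (t ^ 2 * c 0 ^ 2 / 8) * K) hgexp_bdd
    have hφint : Integrable (fun y => ∫ a, Real.exp (t * (H (a, y) - Ef)) ∂μ) ν :=
      integrable_of_bddd hφsm.aestronglyMeasurable K hφbdd
    -- IH applied to g
    have hIH := ih g hgsm.measurable M hgM (fun j => c j.succ) hcg t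
    have hIH2 : ∫ y, Real.exp (t * (g y - Ef)) ∂ν ≤
        Real.exp (t ^ 2 * (∑ j : Fin n, c j.succ ^ 2) / 8) := by
      have h6 : Ef = ∫ y', g y' ∂(Measure.pi fun _ : Fin n => μ) := by rw [hEfg, hν]
      rw [h6, hν]
      exact hIH
    calc ∫ x, Real.exp (t * (f x - Ef)) ∂P1
        = ∫ z, Real.exp (t * (H z - Ef)) ∂(μ.prod ν) :=
          ((hmp.symm e).integral_comp' fun x => Real.exp (t * (f x - Ef))).symm
      _ = ∫ a, ∫ y, Real.exp (t * (H (a, y) - Ef)) ∂ν ∂μ := integral_prod _ hΦprodint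
      _ = ∫ y, ∫ a, Real.exp (t * (H (a, y) - Ef)) ∂μ ∂ν := integral_integral_swap hΦprodint
      _ ≤ ∫ y, Real.exp (t ^ 2 * c 0 ^ 2 / 8) * Real.exp (t * (g y - Ef)) ∂ν :=
          integral_mono hφint hRHSint hstep3
      _ = Real.exp (t ^ 2 * c 0 ^ 2 / 8) * ∫ y, Real.exp (t * (g y - Ef)) ∂ν :=
          integral_const_mul _ _
      _ ≤ Real.exp (t ^ 2 * c 0 ^ 2 / 8) * Real.exp (t ^ 2 * (∑ j : Fin n, c j.succ ^ 2) / 8) :=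
          mul_le_mul_of_nonneg_left hIH2 (Real.exp_nonneg _)
      _ = Real.exp (t ^ 2 * (∑ i, c i ^ 2) / 8) := by
          rw [← Real.exp_add, Fin.sum_univ_succ]
          congr 1
          ring

lemma mcdiarmid_onesided (μ : Measure ℝ) [IsProbabilityMeasure μ]
    (n : ℕ) (f : (Fin n → ℝ) → ℝ) (hf : Measurable f) (M : ℝ) (hM : ∀ x, |f x| ≤ M)
    (c : Fin n → ℝ) (hc : ∀ (i : Fin n) (x x' : Fin n → ℝ),
        (∀ j, j ≠ i → x j = x' j) → |f x - f x'| ≤ c i)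
    (hS : 0 < ∑ i, c i ^ 2) (ε : ℝ) (hε : 0 < ε) :
    ((Measure.pi fun _ : Fin n => μ)
        {x | ε ≤ f x - ∫ y, f y ∂(Measure.pi fun _ : Fin n => μ)}).toReal ≤
      Real.exp (-2 * ε ^ 2 / (∑ i, c i ^ 2)) := by
  have hmM : |∫ y, f y ∂(Measure.pi fun _ : Fin n => μ)| ≤ M := by
    have := norm_integral_le_of_norm_le_const (μ := (Measure.pi fun _ : Fin n => μ))
      (f := f) (C := M) (Filter.Eventually.of_forall fun x => by simpa using hM x)
    simpa using this
  have htpos : 0 < 4 * ε / (∑ i, c i ^ 2) := by positivity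
  have hint : Integrable (fun x => Real.exp ((4 * ε / (∑ i, c i ^ 2)) *
      (f x - ∫ y, f y ∂(Measure.pi fun _ : Fin n => μ))))
      (Measure.pi fun _ : Fin n => μ) := by
    refine integrable_of_bddd (Real.measurable_exp.comp
      ((hf.sub measurable_const).const_mul _)).aestronglyMeasurable
      (Real.exp (|4 * ε / (∑ i, c i ^ 2)| * (2 * M))) ?_
    intro x
    rw [abs_of_pos (Real.exp_pos _), Real.exp_le_exp]
    calc (4 * ε / (∑ i, c i ^ 2)) * (f x - _) ≤ |(4 * ε / (∑ i, c i ^ 2)) * (f x - _)| :=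
          le_abs_self _
      _ = |(4 * ε / (∑ i, c i ^ 2))| * |f x - _| := abs_mul _ _
      _ ≤ |(4 * ε / (∑ i, c i ^ 2))| * (2 * M) := by
          apply mul_le_mul_of_nonneg_left _ (abs_nonneg _)
          calc |f x - _| ≤ |f x| + |_| := abs_sub _ _
            _ ≤ M + M := add_le_add (hM x) hmM
            _ = 2 * M := by ring
  have hmgf := measure_ge_le_exp_mul_mgf
    (X := fun x => f x - ∫ y, f y ∂(Measure.pi fun _ : Fin n => μ))
    (μ := Measure.pi fun _ : Fin n => μ) ε htpos.le hint
  refine hmgf.trans ?_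
  have hmgfle : mgf (fun x => f x - ∫ y, f y ∂(Measure.pi fun _ : Fin n => μ))
      (Measure.pi fun _ : Fin n => μ) (4 * ε / (∑ i, c i ^ 2)) ≤
      Real.exp ((4 * ε / (∑ i, c i ^ 2)) ^ 2 * (∑ i, c i ^ 2) / 8) :=
    mcdiarmid_mgf μ n f hf M hM c hc _
  calc Real.exp (-(4 * ε / (∑ i, c i ^ 2)) * ε) * mgf _ _ _
      ≤ Real.exp (-(4 * ε / (∑ i, c i ^ 2)) * ε) *
        Real.exp ((4 * ε / (∑ i, c i ^ 2)) ^ 2 * (∑ i, c i ^ 2) / 8) :=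
        mul_le_mul_of_nonneg_left hmgfle (Real.exp_nonneg _)
    _ = Real.exp (-2 * ε ^ 2 / (∑ i, c i ^ 2)) := by
        rw [← Real.exp_add]
        congr 1
        field_simp
        ring

lemma mcdiarmid_tail (μ : Measure ℝ) [IsProbabilityMeasure μ]
    (n : ℕ) (f : (Fin n → ℝ) → ℝ) (hf : Measurable f) (M : ℝ) (hM : ∀ x, |f x| ≤ M)
    (c : Fin n → ℝ) (hc : ∀ (i : Fin n) (x x' : Fin n → ℝ),
        (∀ j, j ≠ i → x j = x' j) → |f x - f x'| ≤ c i)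
    (hS : 0 < ∑ i, c i ^ 2) (ε : ℝ) (hε : 0 < ε) :
    (Measure.pi fun _ : Fin n => μ)
        {x | |f x - ∫ y, f y ∂(Measure.pi fun _ : Fin n => μ)| > ε} ≤
      ENNReal.ofReal (2 * Real.exp (-2 * ε ^ 2 / (∑ i, c i ^ 2))) := by
  have hup := mcdiarmid_onesided μ n f hf M hM c hc hS ε hε
  have hlo' := mcdiarmid_onesided μ n (fun x => -f x) hf.neg M
    (fun x => by rw [abs_neg]; exact hM x)
    c (fun i x x' h => by
      rw [show -f x - -f x' = -(f x - f x') from by ring, abs_neg]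
      exact hc i x x' h) hS ε hε
  have hset : {x | ε ≤ -f x - ∫ y, -f y ∂(Measure.pi fun _ : Fin n => μ)} =
      {x | ε ≤ (∫ y, f y ∂(Measure.pi fun _ : Fin n => μ)) - f x} := by
    ext x
    simp only [Set.mem_setOf_eq, integral_neg, sub_neg_eq_add]
    constructor <;> intro h <;> linarith
  rw [show (fun x => -f x) = fun x => -f x from rfl] at hlo'
  have hlo : ((Measure.pi fun _ : Fin n => μ)
      {x | ε ≤ (∫ y, f y ∂(Measure.pi fun _ : Fin n => μ)) - f x}).toReal ≤
      Real.exp (-2 * ε ^ 2 / (∑ i, c i ^ 2)) := by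
    rw [← hset]
    exact hlo'
  have hsub : {x | |f x - ∫ y, f y ∂(Measure.pi fun _ : Fin n => μ)| > ε} ⊆
      {x | ε ≤ f x - ∫ y, f y ∂(Measure.pi fun _ : Fin n => μ)} ∪
      {x | ε ≤ (∫ y, f y ∂(Measure.pi fun _ : Fin n => μ)) - f x} := by
    intro x hx
    have hx' : ε < |f x - ∫ y, f y ∂(Measure.pi fun _ : Fin n => μ)| := hx
    rcases lt_abs.1 hx' with h | h
    · exact Or.inl h.le
    · exact Or.inr (by simp only [Set.mem_setOf_eq]; linarith)
  calc (Measure.pi fun _ : Fin n => μ)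
        {x | |f x - ∫ y, f y ∂(Measure.pi fun _ : Fin n => μ)| > ε}
      ≤ (Measure.pi fun _ : Fin n => μ)
          ({x | ε ≤ f x - ∫ y, f y ∂(Measure.pi fun _ : Fin n => μ)} ∪
           {x | ε ≤ (∫ y, f y ∂(Measure.pi fun _ : Fin n => μ)) - f x}) :=
        measure_mono hsub
    _ ≤ (Measure.pi fun _ : Fin n => μ)
          {x | ε ≤ f x - ∫ y, f y ∂(Measure.pi fun _ : Fin n => μ)} +
        (Measure.pi fun _ : Fin n => μ)
          {x | ε ≤ (∫ y, f y ∂(Measure.pi fun _ : Fin n => μ)) - f x} :=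
        measure_union_le _ _
    _ ≤ ENNReal.ofReal (Real.exp (-2 * ε ^ 2 / (∑ i, c i ^ 2))) +
        ENNReal.ofReal (Real.exp (-2 * ε ^ 2 / (∑ i, c i ^ 2))) := by
        gcongr
        · rw [← ENNReal.ofReal_toReal (measure_ne_top _ _)]
          exact ENNReal.ofReal_le_ofReal hup
        · rw [← ENNReal.ofReal_toReal (measure_ne_top _ _)]
          exact ENNReal.ofReal_le_ofReal hlo
    _ = ENNReal.ofReal (2 * Real.exp (-2 * ε ^ 2 / (∑ i, c i ^ 2))) := by
        rw [← ENNReal.ofReal_add (Real.exp_nonneg _) (Real.exp_nonneg _)]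
        congr 1
        ring

lemma sum_sq_pair (n : ℕ) (y : Fin n → ℝ) :
    ∑ i, ∑ j, (y i - y j) ^ 2 =
      2 * (n : ℝ) * (∑ k, y k ^ 2) - 2 * (∑ k, y k) ^ 2 := by
  have h1 : ∀ i : Fin n, ∑ j, (y i - y j) ^ 2 =
      (n : ℝ) * y i ^ 2 - 2 * y i * (∑ k, y k) + ∑ k, y k ^ 2 := by
    intro i
    have h0 : ∀ j : Fin n, (y i - y j) ^ 2 = y i ^ 2 - 2 * y i * y j + y j ^ 2 := fun j => by
      ring
    rw [Finset.sum_congr rfl fun j _ => h0 j]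
    rw [Finset.sum_add_distrib, Finset.sum_sub_distrib]
    rw [Finset.sum_const, ← Finset.mul_sum]
    simp [Finset.card_univ]
  rw [Finset.sum_congr rfl fun i _ => h1 i]
  rw [Finset.sum_add_distrib, Finset.sum_sub_distrib]
  rw [Finset.sum_const, ← Finset.mul_sum, ← Finset.sum_mul]
  simp only [Finset.card_univ, Fintype.card_fin, nsmul_eq_mul, ← Finset.mul_sum]
  ring

lemma svar_mean_form (n : ℕ) (hn : 2 ≤ n) (y : Fin n → ℝ) :
    ∑ k, (y k - (1 / (n : ℝ)) * ∑ j, y j) ^ 2 =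
      (∑ k, y k ^ 2) - (1 / (n : ℝ)) * (∑ k, y k) ^ 2 := by
  have hn0 : (0:ℝ) < (n : ℝ) := by
    have : 0 < n := by omega
    exact_mod_cast this
  have h0 : ∀ k : Fin n, (y k - (1 / (n : ℝ)) * ∑ j, y j) ^ 2 =
      y k ^ 2 - (2 / (n : ℝ)) * ((∑ j, y j) * y k) +
        (1 / (n : ℝ) ^ 2) * (∑ j, y j) ^ 2 := fun k => by
    field_simp
    ring
  rw [Finset.sum_congr rfl fun k _ => h0 k]
  rw [Finset.sum_add_distrib, Finset.sum_sub_distrib]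
  rw [Finset.sum_const, ← Finset.mul_sum, ← Finset.mul_sum]
  simp only [Finset.card_univ, Fintype.card_fin, nsmul_eq_mul]
  field_simp
  ring

lemma svar_pair (n : ℕ) (hn : 2 ≤ n) (y : Fin n → ℝ) :
    (1 / ((n : ℝ) - 1)) * ∑ k, (y k - (1 / (n : ℝ)) * ∑ j, y j) ^ 2 =
      (1 / (2 * (n : ℝ) * ((n : ℝ) - 1))) * ∑ i, ∑ j, (y i - y j) ^ 2 := by
  have hn0 : (0:ℝ) < (n : ℝ) := by
    have : 0 < n := by omega
    exact_mod_cast this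
  have hn1 : (n : ℝ) - 1 ≠ 0 := by
    have : (2:ℝ) ≤ (n:ℝ) := by exact_mod_cast hn
    linarith
  rw [svar_mean_form n hn y, sum_sq_pair n y]
  field_simp

-- bounded difference of the pairwise-form sample variance
lemma svar_bdd_diff (n : ℕ) (hn : 2 ≤ n) {A B : ℝ} (hAB : A ≤ B)
    (y y' : Fin n → ℝ) (hy : ∀ k, y k ∈ Set.Icc A B) (hy' : ∀ k, y' k ∈ Set.Icc A B)
    (i : Fin n) (hdiff : ∀ j, j ≠ i → y j = y' j) :
    |(1 / ((n : ℝ) - 1)) * ∑ k, (y k - (1 / (n : ℝ)) * ∑ j, y j) ^ 2 -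
      (1 / ((n : ℝ) - 1)) * ∑ k, (y' k - (1 / (n : ℝ)) * ∑ j, y' j) ^ 2| ≤
      (B - A) ^ 2 / (n : ℝ) := by
  have hn0 : (0:ℝ) < (n : ℝ) := by
    have : 0 < n := by omega
    exact_mod_cast this
  have hn1 : (0:ℝ) < (n : ℝ) - 1 := by
    have : (2:ℝ) ≤ (n:ℝ) := by exact_mod_cast hn
    linarith
  rw [svar_pair n hn y, svar_pair n hn y', ← mul_sub]
  simp only [← Finset.sum_sub_distrib]
  -- the summand
  set d : Fin n → Fin n → ℝ := fun a b => (y a - y b) ^ 2 - (y' a - y' b) ^ 2 with hd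
  have hsq : ∀ (z : Fin n → ℝ), (∀ k, z k ∈ Set.Icc A B) → ∀ a b,
      (z a - z b) ^ 2 ∈ Set.Icc (0:ℝ) ((B - A) ^ 2) := by
    intro z hz a b
    constructor
    · positivity
    · have h1 := hz a; have h2 := hz b
      apply sq_le_sq'
      · simp only [Set.mem_Icc] at h1 h2; linarith
      · simp only [Set.mem_Icc] at h1 h2; linarith
  have hdb : ∀ a b, |d a b| ≤ (B - A) ^ 2 := by
    intro a b
    have h1 := hsq y hy a b
    have h2 := hsq y' hy' a b
    simp only [Set.mem_Icc] at h1 h2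
    have hdab : d a b = (y a - y b) ^ 2 - (y' a - y' b) ^ 2 := rfl
    rw [hdab, abs_le]
    constructor <;> [linarith [h1.1, h2.2]; linarith [h1.2, h2.1]]
  have hdzero : ∀ a b, a ≠ i → b ≠ i → d a b = 0 := by
    intro a b ha hb
    simp only [hd, hdiff a ha, hdiff b hb, sub_self]
  have hdiag : d i i = 0 := by simp [hd]
  -- bound the double sum
  have hrow_i : |∑ b, d i b| ≤ ((n : ℝ) - 1) * (B - A) ^ 2 := by
    calc |∑ b, d i b| ≤ ∑ b, |d i b| := Finset.abs_sum_le_sum_abs _ _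
      _ ≤ ∑ b : Fin n, (if b = i then 0 else (B - A) ^ 2) := by
          apply Finset.sum_le_sum
          intro b _
          by_cases hb : b = i
          · simp [hb, hdiag]
          · simp [hb, hdb i b]
      _ = ((n : ℝ) - 1) * (B - A) ^ 2 := by
          have : ∀ b : Fin n, (if b = i then (0:ℝ) else (B - A) ^ 2) =
              (B - A) ^ 2 - (if b = i then (B - A) ^ 2 else 0) := fun b => by
            by_cases hb : b = i <;> simp [hb]
          rw [Finset.sum_congr rfl fun b _ => this b, Finset.sum_sub_distrib,
            Finset.sum_const, Finset.sum_ite_eq' Finset.univ i fun _ => (B - A) ^ 2]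
          simp [Finset.card_univ]
          ring
  have hrow_other : ∀ a, a ≠ i → |∑ b, d a b| ≤ (B - A) ^ 2 := by
    intro a ha
    calc |∑ b, d a b| ≤ ∑ b, |d a b| := Finset.abs_sum_le_sum_abs _ _
      _ ≤ ∑ b : Fin n, (if b = i then (B - A) ^ 2 else 0) := by
          apply Finset.sum_le_sum
          intro b _
          by_cases hb : b = i
          · simp [hb, hdb a i]
          · simp [hb, hdzero a b ha hb]
      _ = (B - A) ^ 2 := by
          rw [Finset.sum_ite_eq' Finset.univ i fun _ => (B - A) ^ 2]
          simp
  have htotal : |∑ a, ∑ b, d a b| ≤ 2 * ((n : ℝ) - 1) * (B - A) ^ 2 := by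
    have hsplit : ∑ a, ∑ b, d a b = (∑ b, d i b) + ∑ a ∈ Finset.univ.erase i, ∑ b, d a b := by
      rw [← Finset.sum_erase_add Finset.univ _ (Finset.mem_univ i)]
      ring
    rw [hsplit]
    calc |(∑ b, d i b) + ∑ a ∈ Finset.univ.erase i, ∑ b, d a b|
        ≤ |∑ b, d i b| + |∑ a ∈ Finset.univ.erase i, ∑ b, d a b| := abs_add_le _ _
      _ ≤ ((n : ℝ) - 1) * (B - A) ^ 2 + ((n : ℝ) - 1) * (B - A) ^ 2 := by
          apply add_le_add hrow_i
          calc |∑ a ∈ Finset.univ.erase i, ∑ b, d a b|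
              ≤ ∑ a ∈ Finset.univ.erase i, |∑ b, d a b| := Finset.abs_sum_le_sum_abs _ _
            _ ≤ ∑ _a ∈ Finset.univ.erase i, (B - A) ^ 2 :=
                Finset.sum_le_sum fun a ha => hrow_other a (Finset.ne_of_mem_erase ha)
            _ = ((n : ℝ) - 1) * (B - A) ^ 2 := by
                rw [Finset.sum_const]
                rw [Finset.card_erase_of_mem (Finset.mem_univ i)]
                simp [Finset.card_univ]
                have : 1 ≤ n := by omega
                rw [Nat.cast_sub this]
                simp
      _ = 2 * ((n : ℝ) - 1) * (B - A) ^ 2 := by ring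
  rw [abs_mul]
  have habs : |1 / (2 * (n : ℝ) * ((n : ℝ) - 1))| = 1 / (2 * (n : ℝ) * ((n : ℝ) - 1)) :=
    abs_of_pos (by positivity)
  rw [habs]
  calc 1 / (2 * (n : ℝ) * ((n : ℝ) - 1)) * |∑ a, ∑ b, d a b|
      ≤ 1 / (2 * (n : ℝ) * ((n : ℝ) - 1)) * (2 * ((n : ℝ) - 1) * (B - A) ^ 2) :=
        mul_le_mul_of_nonneg_left htotal (by positivity)
    _ = (B - A) ^ 2 / (n : ℝ) := by
        field_simp

lemma law_pi {Ω : Type*} [MeasurableSpace Ω] (P : Measure Ω) [IsProbabilityMeasure P] {n : ℕ}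
    (X : Fin n → Ω → ℝ) (hmeas : ∀ k, Measurable (X k))
    (hindep : iIndepFun X P) :
    P.map (fun ω k => X k ω) = Measure.pi (fun k => P.map (X k)) := by
  haveI : ∀ k, IsProbabilityMeasure (P.map (X k)) := fun k =>
    Measure.isProbabilityMeasure_map (hmeas k).aemeasurable
  have hT : Measurable (fun ω k => X k ω) := measurable_pi_lambda _ hmeas
  refine (Measure.pi_eq fun s hs => ?_).symm
  rw [Measure.map_apply hT (MeasurableSet.univ_pi hs)]
  have hpre : (fun ω k => X k ω) ⁻¹' (Set.pi Set.univ s) = ⋂ k ∈ Finset.univ, X k ⁻¹' s k := by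
    ext ω
    simp [Set.mem_pi]
  rw [hpre]
  rw [hindep.measure_inter_preimage_eq_mul Finset.univ (fun k _ => hs k)]
  exact Finset.prod_congr rfl fun k _ => (Measure.map_apply (hmeas k) (hs k)).symm

lemma expec_svar {Ω : Type*} [MeasurableSpace Ω] (P : Measure Ω) [IsProbabilityMeasure P]
    (N : ℕ) (hN : 2 ≤ N) (X : Fin N → Ω → ℝ) (hmeas : ∀ k, Measurable (X k))
    (hindep : iIndepFun X P)
    (X0 : Ω → ℝ) (hident : ∀ k, IdentDistrib (X k) X0 P P)
    (A B : ℝ) (hbdd : ∀ k, ∀ᵐ ω ∂P, X k ω ∈ Set.Icc A B) :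
    ∫ ω, (1 / ((N:ℝ) - 1)) * ∑ k, (X k ω - (1/(N:ℝ)) * ∑ j, X j ω) ^ 2 ∂P
      = (∫ ω, X0 ω ^ 2 ∂P) - (∫ ω, X0 ω ∂P) ^ 2 := by
  have hNR : (2:ℝ) ≤ (N:ℝ) := by exact_mod_cast hN
  set C : ℝ := max |A| |B| with hC
  have habs : ∀ k, ∀ᵐ ω ∂P, |X k ω| ≤ C := by
    intro k
    filter_upwards [hbdd k] with ω hω
    rcases hω with ⟨h1, h2⟩
    have h3 : |A| ≤ C := by rw [hC]; exact le_max_left _ _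
    have h4 : |B| ≤ C := by rw [hC]; exact le_max_right _ _
    rw [abs_le]
    constructor
    · linarith [neg_abs_le A]
    · linarith [le_abs_self B]
  have hint : ∀ k, Integrable (X k) P := fun k =>
    Integrable.mono' (integrable_const C) (hmeas k).aestronglyMeasurable
      ((habs k).mono fun ω h => by simpa using h)
  have hintsq : ∀ k, Integrable (fun ω => X k ω ^ 2) P := fun k =>
    Integrable.mono' (integrable_const (C^2)) ((hmeas k).pow_const 2).aestronglyMeasurable
      ((habs k).mono fun ω h => by
        rw [Real.norm_eq_abs, abs_pow]
        exact pow_le_pow_left₀ (abs_nonneg _) h 2)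
  have hintmul : ∀ k l, Integrable (fun ω => X k ω * X l ω) P := fun k l =>
    Integrable.mono' (integrable_const (C^2)) ((hmeas k).mul (hmeas l)).aestronglyMeasurable
      (((habs k).and (habs l)).mono fun ω h => by
        rw [Real.norm_eq_abs, abs_mul]
        calc |X k ω| * |X l ω| ≤ C * C :=
              mul_le_mul h.1 h.2 (abs_nonneg _) (le_trans (abs_nonneg _) h.1)
          _ = C ^ 2 := by ring)
  set m1 : ℝ := ∫ ω, X0 ω ∂P with hm1def
  set m2 : ℝ := ∫ ω, X0 ω ^ 2 ∂P with hm2def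
  have hm1 : ∀ k, ∫ ω, X k ω ∂P = m1 := fun k => (hident k).integral_eq
  have hm2 : ∀ k, ∫ ω, X k ω ^ 2 ∂P = m2 := fun k =>
    ((hident k).comp (measurable_id.pow_const 2)).integral_eq
  have hmul : ∀ k l, k ≠ l → ∫ ω, X k ω * X l ω ∂P = m1 * m1 := by
    intro k l hkl
    have hind := hindep.indepFun hkl
    have := IndepFun.integral_fun_mul_eq_mul_integral hind (hmeas k).aestronglyMeasurable (hmeas l).aestronglyMeasurable
    calc ∫ ω, X k ω * X l ω ∂P = (∫ ω, X k ω ∂P) * ∫ ω, X l ω ∂P := this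
      _ = m1 * m1 := by rw [hm1 k, hm1 l]
  -- pointwise rewrite
  have hptw : ∀ ω, (1 / ((N:ℝ) - 1)) * ∑ k, (X k ω - (1/(N:ℝ)) * ∑ j, X j ω) ^ 2 =
      (1 / ((N:ℝ) - 1)) * ((∑ k, X k ω ^ 2) - (1/(N:ℝ)) * ∑ i, ∑ j, X i ω * X j ω) := by
    intro ω
    congr 1
    rw [svar_mean_form N hN (fun k => X k ω)]
    congr 1
    congr 1
    rw [sq, Finset.sum_mul_sum]
  rw [integral_congr_ae (Filter.Eventually.of_forall hptw)]
  have hintsum : Integrable (fun ω => ∑ k, X k ω ^ 2) P := integrable_finset_sum _ fun k _ => hintsq k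
  have hintdbl : Integrable (fun ω => ∑ i, ∑ j, X i ω * X j ω) P :=
    integrable_finset_sum _ fun i _ => integrable_finset_sum _ fun j _ => hintmul i j
  rw [integral_const_mul]
  rw [integral_sub hintsum (hintdbl.const_mul _)]
  rw [integral_finset_sum _ fun k _ => hintsq k]
  rw [integral_const_mul]
  rw [integral_finset_sum _ fun i _ => integrable_finset_sum _ fun j _ => hintmul i j]
  have hdbl : ∀ i : Fin N, ∑ j, ∫ ω, X i ω * X j ω ∂P = m2 + ((N:ℝ) - 1) * (m1 * m1) := by
    intro i
    rw [← Finset.sum_erase_add Finset.univ _ (Finset.mem_univ i)]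
    have hii : ∫ ω, X i ω * X i ω ∂P = m2 := by
      rw [← hm2 i]
      congr 1
      funext ω
      ring
    have herase : ∑ j ∈ Finset.univ.erase i, ∫ ω, X i ω * X j ω ∂P =
        ((N:ℝ) - 1) * (m1 * m1) := by
      rw [Finset.sum_congr rfl fun j hj => hmul i j (Finset.ne_of_mem_erase hj).symm]
      rw [Finset.sum_const, Finset.card_erase_of_mem (Finset.mem_univ i)]
      simp only [Finset.card_univ, Fintype.card_fin, nsmul_eq_mul]
      rw [Nat.cast_sub (by omega : 1 ≤ N)]
      push_cast
      ring
    rw [hii, herase]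
    ring
  have hpush : ∀ i : Fin N, ∫ ω, ∑ j, X i ω * X j ω ∂P = ∑ j, ∫ ω, X i ω * X j ω ∂P :=
    fun i => integral_finset_sum _ fun j _ => hintmul i j
  rw [Finset.sum_congr rfl fun i (_ : i ∈ Finset.univ) => (hpush i).trans (hdbl i)]
  rw [Finset.sum_congr rfl fun (k : Fin N) _ => hm2 k]
  rw [Finset.sum_const, Finset.sum_const]
  simp only [Finset.card_univ, Fintype.card_fin, nsmul_eq_mul]
  have hN1 : (N:ℝ) - 1 ≠ 0 := by linarith
  have hN0 : (N:ℝ) ≠ 0 := by linarith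
  field_simp
  ring
end Aux

open MeasureTheory ProbabilityTheory

/-- **Concentration of the unbiased sample variance.** For i.i.d. random variables
`X 1, …, X N` (`N ≥ 2`) taking values in `[A, B]` a.s., the unbiased variance estimator
`σ̂² = (1/(N-1))·∑ (X k - μ̂)²` satisfies, for every `ε > 0`,
`P(|σ̂² - σ²| > ε) ≤ 2·exp(-2(N-1)²ε² / (N(B-A)⁴))`. -/
theorem stmt8 {Ω : Type*} [MeasurableSpace Ω] (P : Measure Ω) [IsProbabilityMeasure P]
    (N : ℕ) (hN : 2 ≤ N)
    (X : Fin N → Ω → ℝ) (hmeas : ∀ k, Measurable (X k))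
    (hindep : iIndepFun X P)
    (hident : ∀ k, IdentDistrib (X k) (X ⟨0, by omega⟩) P P)
    (A B : ℝ) (hAB : A < B)
    (hbdd : ∀ k, ∀ᵐ ω ∂P, X k ω ∈ Set.Icc A B)
    (muhat : Ω → ℝ) (hmuhat : ∀ ω, muhat ω = (1 / (N : ℝ)) * ∑ k, X k ω)
    (σ2 : ℝ) (hσ2 : σ2 = variance (X ⟨0, by omega⟩) P)
    (sigmahat2 : Ω → ℝ)
    (hsig : ∀ ω, sigmahat2 ω = (1 / ((N : ℝ) - 1)) * ∑ k, (X k ω - muhat ω) ^ 2) :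
    ∀ ε : ℝ, 0 < ε →
      P {ω | |sigmahat2 ω - σ2| > ε} ≤
        ENNReal.ofReal
          (2 * Real.exp (-(2 * ((N : ℝ) - 1) ^ 2 * ε ^ 2) / ((N : ℝ) * (B - A) ^ 4))) := by
  intro ε hε
  have hNR : (2:ℝ) ≤ (N:ℝ) := by exact_mod_cast hN
  have hN1 : (0:ℝ) < (N:ℝ) - 1 := by linarith
  have hN0 : (0:ℝ) < (N:ℝ) := by linarith
  have hBA : 0 < B - A := sub_pos.2 hAB
  set X0 : Ω → ℝ := X ⟨0, by omega⟩ with hX0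
  set μ0 : Measure ℝ := P.map X0 with hμ0
  haveI : IsProbabilityMeasure μ0 := Measure.isProbabilityMeasure_map (hmeas _).aemeasurable
  -- clamping
  set cl : ℝ → ℝ := fun r => max A (min r B) with hcl
  have hclmeas : Measurable cl := measurable_const.max (measurable_id.min measurable_const)
  have hclIcc : ∀ r, cl r ∈ Set.Icc A B := fun r =>
    ⟨le_max_left _ _, max_le hAB.le (min_le_right _ _)⟩
  have hclid : ∀ r, r ∈ Set.Icc A B → cl r = r := by
    intro r hr
    rw [hcl]
    simp only []
    rw [min_eq_left hr.2, max_eq_right hr.1]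
  set f : (Fin N → ℝ) → ℝ :=
    fun x => (1 / ((N:ℝ) - 1)) * ∑ k, (cl (x k) - (1/(N:ℝ)) * ∑ j, cl (x j)) ^ 2 with hfdef
  have hfm : Measurable f := by
    apply Measurable.const_mul
    apply Finset.measurable_sum
    intro k _
    apply Measurable.pow_const
    apply Measurable.sub
    · exact hclmeas.comp (measurable_pi_apply k)
    · apply Measurable.const_mul
      exact Finset.measurable_sum _ fun j _ => hclmeas.comp (measurable_pi_apply j)
  have hmean_mem : ∀ x : Fin N → ℝ, (1/(N:ℝ)) * ∑ j, cl (x j) ∈ Set.Icc A B := by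
    intro x
    have h1 : (N:ℝ) * A ≤ ∑ j, cl (x j) := by
      calc (N:ℝ) * A = ∑ _j : Fin N, A := by
            rw [Finset.sum_const]
            simp [Finset.card_univ]
        _ ≤ _ := Finset.sum_le_sum fun j _ => (hclIcc (x j)).1
    have h2 : ∑ j, cl (x j) ≤ (N:ℝ) * B := by
      calc ∑ j, cl (x j) ≤ ∑ _j : Fin N, B := Finset.sum_le_sum fun j _ => (hclIcc (x j)).2
        _ = (N:ℝ) * B := by
            rw [Finset.sum_const]
            simp [Finset.card_univ]
    constructor
    · rw [one_div, inv_mul_eq_div, le_div_iff₀ hN0]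
      linarith
    · rw [one_div, inv_mul_eq_div, div_le_iff₀ hN0]
      linarith
  have hfbound : ∀ x, |f x| ≤ (N:ℝ) * (B - A)^2 / ((N:ℝ) - 1) := by
    intro x
    have h1 : ∀ k : Fin N, (cl (x k) - (1/(N:ℝ)) * ∑ j, cl (x j)) ^ 2 ≤ (B - A)^2 := by
      intro k
      have ha := hclIcc (x k)
      have hb := hmean_mem x
      simp only [Set.mem_Icc] at ha hb
      apply sq_le_sq'
      · linarith
      · linarith
    have h2 : 0 ≤ f x :=
      mul_nonneg (by positivity) (Finset.sum_nonneg fun k _ => sq_nonneg _)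
    rw [abs_of_nonneg h2]
    calc f x ≤ (1/((N:ℝ)-1)) * ∑ _k : Fin N, (B-A)^2 := by
          apply mul_le_mul_of_nonneg_left (Finset.sum_le_sum fun k _ => h1 k) (by positivity)
      _ = (N:ℝ) * (B - A)^2 / ((N:ℝ) - 1) := by
          rw [Finset.sum_const]
          simp [Finset.card_univ]
          field_simp
  have hcdiff : ∀ (i : Fin N) (x x' : Fin N → ℝ), (∀ j, j ≠ i → x j = x' j) →
      |f x - f x'| ≤ (B - A)^2 / (N:ℝ) := by
    intro i x x' h
    exact svar_bdd_diff N hN hAB.le (fun k => cl (x k)) (fun k => cl (x' k))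
      (fun k => hclIcc _) (fun k => hclIcc _) i (fun j hj => by show cl (x j) = cl (x' j); rw [h j hj])
  -- transfer to the product space
  set T : Ω → (Fin N → ℝ) := fun ω k => X k ω with hT
  have hTm : Measurable T := measurable_pi_lambda _ hmeas
  have hlaw : P.map T = Measure.pi (fun _ : Fin N => μ0) := by
    rw [hT, law_pi P X hmeas hindep]
    congr 1
    funext k
    exact (hident k).map_eq
  have haeIcc : ∀ᵐ ω ∂P, ∀ k, X k ω ∈ Set.Icc A B := (ae_all_iff).2 hbdd
  have haefT : ∀ᵐ ω ∂P, f (T ω) = sigmahat2 ω := by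
    filter_upwards [haeIcc] with ω hω
    have hcl' : ∀ k, cl (X k ω) = X k ω := fun k => hclid _ (hω k)
    have h1 : f (T ω) =
        (1 / ((N:ℝ) - 1)) * ∑ k, (cl (X k ω) - (1/(N:ℝ)) * ∑ j, cl (X j ω)) ^ 2 := rfl
    rw [h1, hsig ω, hmuhat ω]
    simp only [hcl']
  -- expectation of sigmahat2
  have habs0 : ∀ᵐ ω ∂P, |X0 ω| ≤ max |A| |B| := by
    filter_upwards [hbdd ⟨0, by omega⟩] with ω hω
    rcases hω with ⟨h1, h2⟩
    rw [abs_le]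
    constructor
    · linarith [neg_abs_le A, neg_le_neg (le_max_left |A| |B|)]
    · linarith [le_abs_self B, le_max_right |A| |B|]
  have hmem2 : MemLp X0 2 P :=
    (memLp_top_of_bound (hmeas _).aestronglyMeasurable (max |A| |B|)
      (habs0.mono fun ω h => by simpa using h)).mono_exponent le_top
  have hvar : σ2 = (∫ ω, X0 ω ^ 2 ∂P) - (∫ ω, X0 ω ∂P)^2 := by
    rw [hσ2, variance_eq_sub hmem2]
    rfl
  have hEsig : ∫ ω, sigmahat2 ω ∂P = σ2 := by
    rw [hvar, ← expec_svar P N hN X hmeas hindep X0 hident A B hbdd]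
    refine integral_congr_ae (Filter.Eventually.of_forall fun ω => ?_)
    rw [hsig ω, hmuhat ω]
  have hEf : ∫ y, f y ∂(Measure.pi fun _ : Fin N => μ0) = σ2 := by
    rw [← hlaw, integral_map hTm.aemeasurable hfm.aestronglyMeasurable]
    rw [integral_congr_ae haefT]
    exact hEsig
  -- the event
  have hSmeas : MeasurableSet {x : Fin N → ℝ | |f x - σ2| > ε} :=
    measurableSet_lt measurable_const (hfm.sub measurable_const).abs
  have hevent : P {ω | |sigmahat2 ω - σ2| > ε} =
      (Measure.pi fun _ : Fin N => μ0) {x | |f x - σ2| > ε} := by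
    have h1 : {ω | |sigmahat2 ω - σ2| > ε} =ᵐ[P] (T ⁻¹' {x | |f x - σ2| > ε}) := by
      rw [Filter.eventuallyEq_set]
      filter_upwards [haefT] with ω hω
      simp only [Set.mem_setOf_eq, Set.mem_preimage, hω]
    rw [measure_congr h1, ← Measure.map_apply hTm hSmeas, hlaw]
  -- apply McDiarmid
  have hSpos : 0 < ∑ _i : Fin N, ((B - A)^2 / (N:ℝ))^2 := by
    rw [Finset.sum_const]
    simp [Finset.card_univ]
    positivity
  have htail := mcdiarmid_tail μ0 N f hfm ((N:ℝ) * (B - A)^2/((N:ℝ)-1)) hfbound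
    (fun _ => (B - A)^2 / (N:ℝ)) hcdiff hSpos ε hε
  rw [hEf] at htail
  rw [hevent]
  refine htail.trans ?_
  apply ENNReal.ofReal_le_ofReal
  apply mul_le_mul_of_nonneg_left _ (by norm_num)
  rw [Real.exp_le_exp]
  have hsum : ∑ _i : Fin N, ((B - A)^2/(N:ℝ))^2 = (B - A)^4/(N:ℝ) := by
    rw [Finset.sum_const]
    simp [Finset.card_univ]
    field_simp
  rw [hsum]
  have hstep : -2 * ε^2 / ((B - A)^4 / (N:ℝ)) = -(2 * (N:ℝ) * ε^2) / ((B - A)^4) := by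
    field_simp
  rw [hstep]
  rw [div_le_div_iff₀ (by positivity) (by positivity)]
  have hsq : ((N:ℝ) - 1)^2 ≤ (N:ℝ)^2 := by nlinarith
  nlinarith [sq_nonneg ε, pow_pos hBA 4, mul_nonneg (sq_nonneg ε) (pow_pos hBA 4).le,
    mul_le_mul_of_nonneg_right hsq (mul_nonneg (sq_nonneg ε) (pow_pos hBA 4).le)]
end
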